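/- Let r, s be positive integers, θ ∈ ℝ^r, κ ∈ (0,2), δ ∈ (0, 2−κ), and η̄ ≥ 0. Let (W_t)_{t≥1} ⊆ ℝ^{s×r} and (η_t)_{t≥1} ⊆ ℝ^s satisfy ‖η_t‖² ≤ η̄² ν_t where ν_t := 1 + tr(W_tᵀ W_t), and let Y_t := W_t θ + η_t. Let (θ̂_t)_{t≥0} be any sequence such that, with e_t := (Y_t − W_t θ̂_{t−1})/ν_t and θ̄_t := θ̂_{t−1} + κ W_tᵀ e_t, it holds that ‖θ − θ̂_t‖ ≤ ‖θ − θ̄_t‖ for all t ≥ 1. Then for every T ≥ 1: κ(2−κ−δ) Σ_{t=1}^{T} ν_t ‖e_t‖² ≤ ‖θ − θ̂_0‖² + T κ η̄²/δ. -/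

import Mathlib

section Aux
open Matrix

private lemma es_norm_sq {n : ℕ} (x : EuclideanSpace ℝ (Fin n)) : ‖x‖ ^ 2 = ∑ i, x i ^ 2 := by
  rw [EuclideanSpace.norm_sq_eq]
  simp [Real.norm_eq_abs, sq_abs]

private lemma es_adjoint {s r : ℕ} (M : Matrix (Fin s) (Fin r) ℝ)
    (x : EuclideanSpace ℝ (Fin r)) (y : EuclideanSpace ℝ (Fin s)) :
    (inner ℝ x (Matrix.toEuclideanLin Mᵀ y) : ℝ) = inner ℝ (Matrix.toEuclideanLin M x) y := by
  have h1 : ∀ j, (Matrix.toEuclideanLin Mᵀ y) j = ∑ i, M i j * y i := fun j => rfl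
  have h2 : ∀ i, (Matrix.toEuclideanLin M x) i = ∑ j, M i j * x j := fun i => rfl
  simp only [PiLp.inner_apply, RCLike.inner_apply, conj_trivial, h1, h2]
  simp_rw [Finset.mul_sum, Finset.sum_mul]
  rw [Finset.sum_comm]
  exact Finset.sum_congr rfl fun i _ => Finset.sum_congr rfl fun j _ => by ring

private lemma es_frob {s r : ℕ} (M : Matrix (Fin s) (Fin r) ℝ)
    (y : EuclideanSpace ℝ (Fin s)) :
    ‖Matrix.toEuclideanLin Mᵀ y‖ ^ 2 ≤ Matrix.trace (Mᵀ * M) * ‖y‖ ^ 2 := by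
  have h1 : ∀ j, (Matrix.toEuclideanLin Mᵀ y) j = ∑ i, M i j * y i := fun j => rfl
  have htr : Matrix.trace (Mᵀ * M) = ∑ j, ∑ i, M i j ^ 2 := by
    simp [Matrix.trace, Matrix.mul_apply, Matrix.diag, sq]
  rw [es_norm_sq, es_norm_sq, htr, Finset.sum_mul]
  refine Finset.sum_le_sum fun j _ => ?_
  rw [h1]
  exact Finset.sum_mul_sq_le_sq_mul_sq _ _ _

private lemma es_trace_nonneg {s r : ℕ} (M : Matrix (Fin s) (Fin r) ℝ) :
    0 ≤ Matrix.trace (Mᵀ * M) := by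
  have htr : Matrix.trace (Mᵀ * M) = ∑ j, ∑ i, M i j ^ 2 := by
    simp [Matrix.trace, Matrix.mul_apply, Matrix.diag, sq]
  rw [htr]; positivity

open Matrix in
/-- Accumulated error bound for the projected normalized gradient-descent scheme:
`κ(2-κ-δ) ∑_{t=1}^{T} ν_t ‖e_t‖² ≤ ‖θ - θ̂₀‖² + T κ η̄²/δ`, where
`ν_t = 1 + tr(W_tᵀ W_t)`, `Y_t = W_t θ + η_t` with `‖η_t‖² ≤ η̄² ν_t`,
`e_t = (Y_t - W_t θ̂_{t-1})/ν_t`, `θ̄_t = θ̂_{t-1} + κ W_tᵀ e_t`, and the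
(projection) estimates satisfy `‖θ - θ̂_t‖ ≤ ‖θ - θ̄_t‖`. -/
theorem stmt7 (r s : ℕ) (hr : 0 < r) (hs : 0 < s)
    (θ : EuclideanSpace ℝ (Fin r)) (κ δ ηbar : ℝ)
    (hκ : κ ∈ Set.Ioo (0 : ℝ) 2) (hδ : δ ∈ Set.Ioo (0 : ℝ) (2 - κ)) (hηbar : 0 ≤ ηbar)
    (W : ℕ → Matrix (Fin s) (Fin r) ℝ) (η : ℕ → EuclideanSpace ℝ (Fin s))
    (ν : ℕ → ℝ) (hν : ∀ t, ν t = 1 + Matrix.trace ((W t)ᵀ * W t))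
    (hηb : ∀ t, 1 ≤ t → ‖η t‖ ^ 2 ≤ ηbar ^ 2 * ν t)
    (Y : ℕ → EuclideanSpace ℝ (Fin s))
    (hY : ∀ t, Y t = Matrix.toEuclideanLin (W t) θ + η t)
    (θhat : ℕ → EuclideanSpace ℝ (Fin r))
    (e : ℕ → EuclideanSpace ℝ (Fin s))
    (he : ∀ t, e (t + 1) =
      (ν (t + 1))⁻¹ • (Y (t + 1) - Matrix.toEuclideanLin (W (t + 1)) (θhat t)))
    (θbar : ℕ → EuclideanSpace ℝ (Fin r))
    (hθbar : ∀ t, θbar (t + 1) =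
      θhat t + κ • Matrix.toEuclideanLin (W (t + 1))ᵀ (e (t + 1)))
    (hproj : ∀ t, ‖θ - θhat (t + 1)‖ ≤ ‖θ - θbar (t + 1)‖) :
    ∀ T, 1 ≤ T →
      κ * (2 - κ - δ) * ∑ t ∈ Finset.Icc 1 T, ν t * ‖e t‖ ^ 2 ≤
        ‖θ - θhat 0‖ ^ 2 + T * κ * ηbar ^ 2 / δ := by
  obtain ⟨hκ0, hκ2⟩ := hκ
  obtain ⟨hδ0, hδ2⟩ := hδ
  -- ν ≥ 1
  have hν1 : ∀ t, 1 ≤ ν t := fun t => by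
    rw [hν t]; linarith [es_trace_nonneg (W t)]
  have hνpos : ∀ t, 0 < ν t := fun t => lt_of_lt_of_le one_pos (hν1 t)
  -- key per-step inequality
  have key : ∀ t : ℕ, κ * (2 - κ - δ) * (ν (t + 1) * ‖e (t + 1)‖ ^ 2) ≤
      ‖θ - θhat t‖ ^ 2 - ‖θ - θhat (t + 1)‖ ^ 2 + κ * ηbar ^ 2 / δ := by
    intro t
    set n := t + 1
    have hνn := hνpos n
    -- W (θ - θhat) = ν • e - η
    have hWe : Matrix.toEuclideanLin (W n) (θ - θhat t) = ν n • e n - η n := by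
      rw [map_sub]
      have : ν n • e n = Y n - Matrix.toEuclideanLin (W n) (θhat t) := by
        rw [he t, smul_smul, mul_inv_cancel₀ (ne_of_gt hνn), one_smul]
      rw [hY n] at this
      rw [this]
      abel
    -- inner product identity
    have hip : (inner ℝ (θ - θhat t) (Matrix.toEuclideanLin (W n)ᵀ (e n)) : ℝ) =
        ν n * ‖e n‖ ^ 2 - inner ℝ (η n) (e n) := by
      rw [es_adjoint, hWe, inner_sub_left, real_inner_smul_left,
        real_inner_self_eq_norm_sq]
    -- Frobenius bound
    have hfr : ‖Matrix.toEuclideanLin (W n)ᵀ (e n)‖ ^ 2 ≤ ν n * ‖e n‖ ^ 2 := by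
      refine le_trans (es_frob (W n) (e n)) ?_
      have : Matrix.trace ((W n)ᵀ * W n) ≤ ν n := by rw [hν n]; linarith
      nlinarith [sq_nonneg ‖e n‖]
    -- expansion of ‖θ - θbar‖²
    have hexp : ‖θ - θbar n‖ ^ 2 = ‖θ - θhat t‖ ^ 2
        - 2 * κ * (ν n * ‖e n‖ ^ 2 - inner ℝ (η n) (e n))
        + κ ^ 2 * ‖Matrix.toEuclideanLin (W n)ᵀ (e n)‖ ^ 2 := by
      have : θ - θbar n = (θ - θhat t) - κ • Matrix.toEuclideanLin (W n)ᵀ (e n) := by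
        rw [hθbar t]; abel
      rw [this, norm_sub_sq_real, real_inner_smul_right, hip, norm_smul]
      simp [mul_pow, abs_mul_abs_self, sq_abs]
      ring
    -- projection step
    have hp2 : ‖θ - θhat n‖ ^ 2 ≤ ‖θ - θbar n‖ ^ 2 :=
      pow_le_pow_left₀ (norm_nonneg _) (hproj t) 2
    -- Young-type bound on the cross term
    have hcross : 2 * (inner ℝ (η n) (e n) : ℝ) ≤ δ * (ν n * ‖e n‖ ^ 2) + ηbar ^ 2 / δ := by
      have h1 : (inner ℝ (η n) (e n) : ℝ) ≤ ‖η n‖ * ‖e n‖ := real_inner_le_norm _ _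
      have h2 : ‖η n‖ ^ 2 ≤ ηbar ^ 2 * ν n := hηb n (Nat.le_add_left 1 t)
      have hd : (0:ℝ) < δ * ν n := by positivity
      have h3 : 2 * (‖η n‖ * ‖e n‖) - δ * ν n * ‖e n‖ ^ 2 ≤ ‖η n‖ ^ 2 / (δ * ν n) := by
        rw [le_div_iff₀ hd]
        nlinarith [sq_nonneg (δ * ν n * ‖e n‖ - ‖η n‖)]
      have h4 : ‖η n‖ ^ 2 / (δ * ν n) ≤ ηbar ^ 2 / δ := by
        rw [div_le_div_iff₀ (by positivity) hδ0]
        nlinarith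
      nlinarith
    have hbar := hexp ▸ hp2
    have hA : κ * (2 * (inner ℝ (η n) (e n) : ℝ)) ≤ κ * (δ * (ν n * ‖e n‖ ^ 2) + ηbar ^ 2 / δ) :=
      mul_le_mul_of_nonneg_left hcross (le_of_lt hκ0)
    have hB : κ ^ 2 * ‖Matrix.toEuclideanLin (W n)ᵀ (e n)‖ ^ 2 ≤ κ ^ 2 * (ν n * ‖e n‖ ^ 2) :=
      mul_le_mul_of_nonneg_left hfr (sq_nonneg κ)
    set E := ν n * ‖e n‖ ^ 2 with hE
    set I := (inner ℝ (η n) (e n) : ℝ) with hI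
    set F := ‖Matrix.toEuclideanLin (W n)ᵀ (e n)‖ ^ 2 with hF
    set Vt := ‖θ - θhat t‖ ^ 2 with hVt
    set Vn := ‖θ - θhat n‖ ^ 2 with hVn
    clear_value E I F Vt Vn
    clear hE hI hF hVt hVn hWe hip hfr hexp hp2 hcross
    rw [mul_div_assoc]
    linarith [hA, hB, hbar]
  -- telescoping sum
  have tel : ∀ T : ℕ, κ * (2 - κ - δ) * ∑ t ∈ Finset.Icc 1 T, ν t * ‖e t‖ ^ 2 ≤
      ‖θ - θhat 0‖ ^ 2 - ‖θ - θhat T‖ ^ 2 + T * (κ * ηbar ^ 2 / δ) := by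
    intro T
    induction T with
    | zero => simp
    | succ T ih =>
      rw [Finset.sum_Icc_succ_top (Nat.le_add_left 1 T), mul_add]
      have := key T
      push_cast
      linarith
  intro T hT
  have := tel T
  have hV : 0 ≤ ‖θ - θhat T‖ ^ 2 := sq_nonneg _
  calc κ * (2 - κ - δ) * ∑ t ∈ Finset.Icc 1 T, ν t * ‖e t‖ ^ 2
      ≤ ‖θ - θhat 0‖ ^ 2 - ‖θ - θhat T‖ ^ 2 + T * (κ * ηbar ^ 2 / δ) := this
    _ ≤ ‖θ - θhat 0‖ ^ 2 + T * κ * ηbar ^ 2 / δ := by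
        have hh : (T:ℝ) * (κ * ηbar ^ 2 / δ) = T * κ * ηbar ^ 2 / δ := by ring
        linarith [hV, hh.le, hh.ge]
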